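/- For every real ε > 0 there exists a natural number p₀ such that for all p ≥ p₀ and all natural numbers n ≥ 1, one has (as real numbers) (1 − ε)·(J(p·n) + 1) ≤ n·J(p) + 1 ≤ J(p·n) + 1. -/

import Mathlib

/-- `J n = ∑_{i=0}^∞ ⌊n/2^i⌋`.  Since `⌊n/2^i⌋ = 0` whenever `2^i > n`
(in particular for all `i ≥ n`, as `2^i ≥ i + 1 > n`), the infinite sum
equals the finite sum over `i = 0, …, n`. -/
def J (n : ℕ) : ℕ := ∑ i ∈ Finset.range (n + 1), n / 2 ^ i

lemma J_ge (m : ℕ) : m ≤ J m := by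
  have h0 : (0:ℕ) ∈ Finset.range (m+1) := by simp
  have := Finset.single_le_sum (f := fun i => m / 2 ^ i)
    (fun i _ => Nat.zero_le _) h0
  simpa [J] using this

lemma two_mul_le_two_pow : ∀ j : ℕ, 2 * j ≤ 2 ^ j := by
  intro j
  induction j with
  | zero => norm_num
  | succ k ih =>
    rcases Nat.eq_zero_or_pos k with rfl | hk
    · norm_num
    · have h2 : 2 ≤ 2 ^ k := Nat.one_lt_two_pow_iff.mpr (by omega)
      calc 2 * (k+1) = 2*k + 2 := by ring
        _ ≤ 2^k + 2^k := by omega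
        _ = 2^(k+1) := by ring

lemma mul_J_le (p n : ℕ) (hn : 1 ≤ n) : n * J p ≤ J (p * n) := by
  unfold J
  rw [Finset.mul_sum]
  calc ∑ i ∈ Finset.range (p+1), n * (p / 2^i)
      ≤ ∑ i ∈ Finset.range (p+1), (p*n) / 2^i := by
        refine Finset.sum_le_sum fun i _ => ?_
        calc n * (p / 2^i) ≤ n * p / 2^i := Nat.mul_div_le_mul_div_assoc _ _ _
          _ = p * n / 2^i := by rw [Nat.mul_comm]
    _ ≤ ∑ i ∈ Finset.range (p*n+1), (p*n) / 2^i := by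
        refine Finset.sum_le_sum_of_subset (Finset.range_subset_range.mpr ?_)
        have : p ≤ p * n := Nat.le_mul_of_pos_right p (by omega)
        omega

lemma J_le_two_mul (m : ℕ) : (J m : ℝ) ≤ 2 * m := by
  unfold J
  push_cast
  calc ∑ i ∈ Finset.range (m+1), ((m / 2^i : ℕ) : ℝ)
      ≤ ∑ i ∈ Finset.range (m+1), (m:ℝ) / 2^i := by
        refine Finset.sum_le_sum fun i _ => ?_
        have := Nat.cast_div_le (m := m) (n := 2^i) (α := ℝ)
        push_cast at this
        exact this
    _ = (m:ℝ) * ∑ i ∈ Finset.range (m+1), (1/2:ℝ)^i := by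
        rw [Finset.mul_sum]
        refine Finset.sum_congr rfl fun i _ => ?_
        rw [div_pow, one_pow]
        ring
    _ ≤ (m:ℝ) * 2 := by
        have := sum_geometric_two_le (m+1)
        have hm : (0:ℝ) ≤ m := Nat.cast_nonneg m
        nlinarith
    _ = 2 * m := by ring

lemma geom_half (L : ℕ) : ∑ i ∈ Finset.range (L+1), (1/2:ℝ)^i = 2 - (1/2)^L := by
  induction L with
  | zero => norm_num
  | succ k ih =>
    rw [Finset.sum_range_succ, ih]
    ring

lemma two_mul_le_J (p : ℕ) (hp : 1 ≤ p) :
    (2 * p : ℝ) ≤ J p + Nat.log 2 p + 3 := by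
  set L := Nat.log 2 p with hL
  have hLp : L + 1 ≤ p + 1 := by
    have h1 : 2 ^ L ≤ p := Nat.pow_log_le_self 2 (by omega)
    have h2 : L < 2 ^ L := Nat.lt_two_pow_self
    omega
  have hsub : (∑ i ∈ Finset.range (L+1), ((p / 2^i : ℕ) : ℝ)) ≤ J p := by
    unfold J
    push_cast
    exact Finset.sum_le_sum_of_subset_of_nonneg (Finset.range_subset_range.mpr hLp)
      (fun i _ _ => by positivity)
  have hterm : ∀ i ∈ Finset.range (L+1), (p:ℝ)/2^i - 1 ≤ ((p / 2^i : ℕ) : ℝ) := by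
    intro i _
    have hpos : 0 < 2^i := Nat.two_pow_pos i
    have hdm := Nat.div_add_mod p (2^i)
    have hmod : p % 2^i < 2^i := Nat.mod_lt _ hpos
    have h : p < 2^i * (p / 2^i) + 2^i := by omega
    have h' := (Nat.cast_lt (α := ℝ)).mpr h
    push_cast at h'
    have h2 : (0:ℝ) < 2^i := by positivity
    have h3 : (p:ℝ)/2^i < ((p / 2^i : ℕ) : ℝ) + 1 := by
      rw [div_lt_iff₀ h2]
      nlinarith
    linarith
  have hsum : (p:ℝ) * (2 - (1/2)^L) - (L+1)
      ≤ ∑ i ∈ Finset.range (L+1), ((p / 2^i : ℕ) : ℝ) := by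
    have := Finset.sum_le_sum hterm
    have heq : ∑ i ∈ Finset.range (L+1), ((p:ℝ)/2^i - 1)
        = (p:ℝ) * (2 - (1/2)^L) - (L+1) := by
      rw [Finset.sum_sub_distrib, Finset.sum_const, Finset.card_range]
      have : ∑ i ∈ Finset.range (L+1), (p:ℝ)/2^i
          = (p:ℝ) * ∑ i ∈ Finset.range (L+1), (1/2:ℝ)^i := by
        rw [Finset.mul_sum]
        refine Finset.sum_congr rfl fun i _ => ?_
        rw [div_pow, one_pow]; ring
      rw [this, geom_half]
      push_cast
      ring
    linarith [heq ▸ this]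
  have hpbound : (p:ℝ) * (1/2)^L ≤ 2 := by
    have h1 : p < 2 ^ (L+1) := Nat.lt_pow_succ_log_self (by norm_num) p
    have h1' : (p:ℝ) < 2 ^ (L+1) := by exact_mod_cast h1
    have h2 : (0:ℝ) < 2^L := by positivity
    have h3 : (2:ℝ)^(L+1) = 2 * 2^L := by ring
    have h4 : ((1:ℝ)/2)^L = 1/2^L := by rw [div_pow, one_pow]
    rw [h4]
    rw [mul_one_div, div_le_iff₀ h2]
    nlinarith
  nlinarith [hsub, hsum, hpbound]

/-- For every real `ε > 0` there exists `p₀` such that for all `p ≥ p₀` and all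
`n ≥ 1`, one has (as real numbers)
`(1 − ε)·(J(p·n) + 1) ≤ n·J(p) + 1 ≤ J(p·n) + 1`. -/
theorem J_approx (ε : ℝ) (hε : 0 < ε) :
    ∃ p₀ : ℕ, ∀ p ≥ p₀, ∀ n : ℕ, 1 ≤ n →
      (1 - ε) * (J (p * n) + 1 : ℝ) ≤ n * J p + 1 ∧
        (n * J p + 1 : ℝ) ≤ J (p * n) + 1 := by
  obtain ⟨m, hm⟩ := pow_unbounded_of_one_lt (1/ε) (one_lt_two : (1:ℝ) < 2)
  refine ⟨2^(2*m+6), fun p hp n hn => ?_⟩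
  have hp1 : 1 ≤ p := le_trans Nat.one_le_two_pow hp
  set L := Nat.log 2 p with hLdef
  have hLbig : 2*m+6 ≤ L := by
    have h := Nat.log_mono_right (b := 2) hp
    rwa [Nat.log_pow (by norm_num)] at h
  have hmL : m ≤ L := by omega
  have hεm : 1 ≤ ε * 2^m := by
    have h2 : (0:ℝ) < 2^m := by positivity
    rw [div_lt_iff₀ hε] at hm
    nlinarith
  have hkey : (L:ℝ) + 3 ≤ ε * p := by
    have h2L : (2:ℕ)^L ≤ p := Nat.pow_log_le_self 2 (by omega)
    have hnat : L + 3 ≤ 2^(L - m) := by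
      have := two_mul_le_two_pow (L - m)
      omega
    have h2Lr : ((2:ℝ))^L ≤ p := by exact_mod_cast h2L
    calc (L:ℝ) + 3 ≤ (2:ℝ)^(L-m) := by exact_mod_cast hnat
      _ = 1 * 2^(L-m) := by ring
      _ ≤ (ε * 2^m) * 2^(L-m) := by
          exact mul_le_mul_of_nonneg_right hεm (by positivity)
      _ = ε * 2^(m + (L-m)) := by rw [pow_add]; ring
      _ = ε * 2^L := by rw [Nat.add_sub_cancel' hmL]
      _ ≤ ε * p := by nlinarith
  have hn0 : (0:ℝ) ≤ n := Nat.cast_nonneg n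
  have hn1 : (1:ℝ) ≤ n := by exact_mod_cast hn
  have h1 : (n:ℝ) * J p ≤ J (p*n) := by exact_mod_cast mul_J_le p n hn
  refine ⟨?_, by linarith⟩
  have hA : (J (p*n):ℝ) ≤ n * J p + n * (L + 3) := by
    have h2 := J_le_two_mul (p*n)
    have h3 := two_mul_le_J p hp1
    rw [← hLdef] at h3
    have h4 : (2:ℝ) * (p*n) = n * (2*p) := by ring
    push_cast at h2
    have h5 : (n:ℝ) * (2*p) ≤ n * (J p + L + 3) := by nlinarith
    nlinarith
  have hB : (n:ℝ) * (L+3) ≤ ε * (J (p*n) + 1) := by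
    have hJge : ((p*n:ℕ):ℝ) ≤ J (p*n) := by exact_mod_cast J_ge (p*n)
    push_cast at hJge
    have h6 : (n:ℝ) * (L+3) ≤ n * (ε * p) :=
      mul_le_mul_of_nonneg_left hkey hn0
    nlinarith
  nlinarith [Nat.cast_nonneg (J (p*n)) (α := ℝ)]
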